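/- Let p ∈ (1,∞) and f ∈ L^p(ℝ). Suppose there exists x₀ ∈ ℝ such that the one-sided limits f(x₀⁺) and f(x₀⁻) exist and f(x₀⁺) ≠ f(x₀⁻). Then for every δ > 0 the Stein derivative 𝒟^{1/p} f is not in L^p(B(x₀, δ)); consequently f does not belong to the Bessel potential space L^p_{1/p}(ℝ). -/

import Mathlib

open MeasureTheory
open scoped ENNReal

/-- The Stein derivative of order `b`:
`𝒟^b h(x) = (∫ |h(x)-h(y)|² / |x-y|^{1+2b} dy)^{1/2}`. -/
noncomputable def steinD (b : ℝ) (h : ℝ → ℂ) (x : ℝ) : ℝ≥0∞ :=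
  (∫⁻ y : ℝ, (‖h x - h y‖₊ : ℝ≥0∞) ^ 2 / ENNReal.ofReal |x - y| ^ (1 + 2 * b)) ^ ((1 : ℝ) / 2)

open Set intervalIntegral
lemma lintegral_inv_Ioo_top {m : ℝ} (hm : 0 < m) :
    ∫⁻ x in Ioo (0:ℝ) m, (ENNReal.ofReal x)⁻¹ = ⊤ := by
  by_contra h
  have hlt : ∫⁻ x in Ioo (0:ℝ) m, (ENNReal.ofReal x)⁻¹ < ⊤ := lt_top_iff_ne_top.2 h
  have hint : IntegrableOn (fun x : ℝ => x⁻¹) (Ioo (0:ℝ) m) := by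
    refine ⟨Measurable.aestronglyMeasurable measurable_inv, ?_⟩
    rw [hasFiniteIntegral_def]
    have : ∫⁻ x in Ioo (0:ℝ) m, (‖x⁻¹‖₊ : ℝ≥0∞) = ∫⁻ x in Ioo (0:ℝ) m, (ENNReal.ofReal x)⁻¹ := by
      refine setLIntegral_congr_fun measurableSet_Ioo (fun x hx => ?_)
      rw [← ENNReal.ofReal_inv_of_pos hx.1, ← enorm_eq_nnnorm, ← ofReal_norm_eq_enorm,
        Real.norm_eq_abs, abs_of_nonneg (inv_nonneg.2 hx.1.le)]
    simp only [enorm_eq_nnnorm]; rw [this]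
    exact hlt
  have hint' : IntervalIntegrable (fun x : ℝ => x⁻¹) volume 0 m :=
    (intervalIntegrable_iff_integrableOn_Ioo_of_le hm.le).2 hint
  rw [intervalIntegrable_inv_iff] at hint'
  rcases hint' with h1 | h2
  · exact hm.ne h1
  · exact h2 Set.left_mem_uIcc

lemma real_calc {p c t : ℝ} (hp : 1 < p) (hc : 0 < c) (ht : 0 < t) :
    (c ^ 2 * t / (2 * t) ^ (1 + 2 * (1 / p))) ^ ((1:ℝ) / 2 * p)
      = c ^ p / 2 ^ ((1 + 2 * (1 / p)) * ((1:ℝ) / 2 * p)) * t⁻¹ := by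
  have hp0 : (0:ℝ) < p := by linarith
  set e : ℝ := 1 + 2 * (1 / p) with he_def
  set q : ℝ := (1:ℝ) / 2 * p with hq_def
  have he : 0 < e := by positivity
  have hq : 0 < q := by positivity
  have heq : e * q = q + 1 := by rw [he_def, hq_def]; field_simp
  have h2q : ((2:ℕ) : ℝ) * q = p := by push_cast [hq_def]; ring
  rw [Real.mul_rpow two_pos.le ht.le,
      Real.div_rpow (by positivity) (by positivity),
      Real.mul_rpow (by positivity) ht.le,
      Real.mul_rpow (by positivity) (by positivity),
      ← Real.rpow_natCast c 2, ← Real.rpow_mul hc.le,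
      ← Real.rpow_mul two_pos.le, ← Real.rpow_mul ht.le,
      h2q, heq, Real.rpow_add ht, Real.rpow_one]
  have ht' : t ^ q ≠ 0 := (Real.rpow_pos_of_pos ht q).ne'
  have h2' : (2:ℝ) ^ (q + 1) ≠ 0 := (Real.rpow_pos_of_pos two_pos _).ne'
  field_simp

lemma steinD_key {p c : ℝ} (hp : 1 < p) (hc : 0 < c) (f : ℝ → ℂ) {x₀ x : ℝ}
    (hx : x₀ < x)
    (hfar : ∀ y ∈ Ioo (x₀ - (x - x₀)) x₀, c ≤ ‖f x - f y‖) :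
    ENNReal.ofReal (c ^ p / 2 ^ ((1 + 2 * (1 / p)) * ((1:ℝ) / 2 * p)))
        * (ENNReal.ofReal (x - x₀))⁻¹
      ≤ steinD (1 / p) f x ^ p := by
  have hp0 : (0:ℝ) < p := by linarith
  set t : ℝ := x - x₀ with ht_def
  have ht : 0 < t := by simp [ht_def]; linarith
  set e : ℝ := 1 + 2 * (1 / p) with he_def
  have he : 0 < e := by positivity
  set S : Set ℝ := Ioo (x₀ - t) x₀ with hS_def
  have hind : ∀ y, S.indicator (fun _ => ENNReal.ofReal (c ^ 2 / (2 * t) ^ e)) y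
      ≤ (‖f x - f y‖₊ : ℝ≥0∞) ^ 2 / ENNReal.ofReal |x - y| ^ (1 + 2 * (1 / p)) := by
    intro y
    by_cases hy : y ∈ S
    · rw [Set.indicator_of_mem hy]
      obtain ⟨hy1, hy2⟩ := hy
      have habs : |x - y| ≤ 2 * t := by
        rw [abs_of_pos (by linarith)]; linarith
      have hc2 : ENNReal.ofReal (c ^ 2) ≤ (‖f x - f y‖₊ : ℝ≥0∞) ^ 2 := by
        rw [← enorm_eq_nnnorm, ← ofReal_norm_eq_enorm, ← ENNReal.ofReal_pow (norm_nonneg _)]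
        exact ENNReal.ofReal_le_ofReal
          (pow_le_pow_left₀ hc.le (hfar y ⟨hy1, hy2⟩) 2)
      calc ENNReal.ofReal (c ^ 2 / (2 * t) ^ e)
          = ENNReal.ofReal (c ^ 2) / ENNReal.ofReal ((2 * t) ^ e) :=
            ENNReal.ofReal_div_of_pos (by positivity)
        _ = ENNReal.ofReal (c ^ 2) / ENNReal.ofReal (2 * t) ^ e := by
            rw [ENNReal.ofReal_rpow_of_pos (by positivity)]
        _ ≤ (‖f x - f y‖₊ : ℝ≥0∞) ^ 2 / ENNReal.ofReal |x - y| ^ e :=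
            ENNReal.div_le_div hc2
              (ENNReal.rpow_le_rpow (ENNReal.ofReal_le_ofReal habs) he.le)
    · rw [Set.indicator_of_notMem hy]; exact zero_le
  have hvol : volume S = ENNReal.ofReal t := by
    rw [hS_def, Real.volume_Ioo]; congr 1; ring
  have hlow : ENNReal.ofReal (c ^ 2 * t / (2 * t) ^ e)
      ≤ ∫⁻ y : ℝ, (‖f x - f y‖₊ : ℝ≥0∞) ^ 2
          / ENNReal.ofReal |x - y| ^ (1 + 2 * (1 / p)) := by
    have h1 : ∫⁻ y : ℝ, S.indicator (fun _ => ENNReal.ofReal (c ^ 2 / (2 * t) ^ e)) y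
        = ENNReal.ofReal (c ^ 2 / (2 * t) ^ e) * ENNReal.ofReal t := by
      rw [lintegral_indicator measurableSet_Ioo _, setLIntegral_const, hvol]
    calc ENNReal.ofReal (c ^ 2 * t / (2 * t) ^ e)
        = ENNReal.ofReal (c ^ 2 / (2 * t) ^ e) * ENNReal.ofReal t := by
          rw [← ENNReal.ofReal_mul (by positivity)]; congr 1; ring
      _ = ∫⁻ y : ℝ, S.indicator (fun _ => ENNReal.ofReal (c ^ 2 / (2 * t) ^ e)) y := h1.symm
      _ ≤ _ := lintegral_mono hind
  have hstein : (ENNReal.ofReal (c ^ 2 * t / (2 * t) ^ e)) ^ ((1:ℝ) / 2 * p)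
      ≤ steinD (1 / p) f x ^ p := by
    rw [steinD, ← ENNReal.rpow_mul]
    exact ENNReal.rpow_le_rpow hlow (by positivity)
  refine le_trans (le_of_eq ?_) hstein
  rw [ENNReal.ofReal_rpow_of_pos (by positivity), real_calc hp hc ht,
    ENNReal.ofReal_mul (by positivity), ENNReal.ofReal_inv_of_pos ht]

/-- If `f ∈ L^p(ℝ)` has a jump discontinuity at `x₀` (one-sided limits exist and differ),
then `𝒟^{1/p} f ∉ L^p(B(x₀,δ))` for every `δ > 0`; consequently `𝒟^{1/p} f ∉ L^p(ℝ)`,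
i.e. `f` is not in the Bessel potential space `L^p_{1/p}(ℝ)` (via Stein's
characterization). -/
theorem steinD_jump_not_Lp (p : ℝ) (hp : 1 < p) (f : ℝ → ℂ)
    (hf : MemLp f (ENNReal.ofReal p)) (x₀ : ℝ) (L R : ℂ)
    (hL : Filter.Tendsto f (nhdsWithin x₀ (Set.Iio x₀)) (nhds L))
    (hR : Filter.Tendsto f (nhdsWithin x₀ (Set.Ioi x₀)) (nhds R))
    (hLR : L ≠ R) :
    (∀ δ : ℝ, 0 < δ → ∫⁻ x in Metric.ball x₀ δ, steinD (1 / p) f x ^ p = ⊤) ∧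
      (∫⁻ x : ℝ, steinD (1 / p) f x ^ p) = ⊤ := by
  have hp0 : (0:ℝ) < p := by linarith
  have hJ : 0 < ‖R - L‖ := by
    rw [norm_pos_iff, sub_ne_zero]; exact fun h => hLR h.symm
  set c : ℝ := ‖R - L‖ / 2 with hc_def
  have hc : 0 < c := by positivity
  rw [Metric.tendsto_nhdsWithin_nhds] at hL hR
  obtain ⟨ηL, hηL, hLclose⟩ := hL (‖R - L‖ / 4) (by positivity)
  obtain ⟨ηR, hηR, hRclose⟩ := hR (‖R - L‖ / 4) (by positivity)
  set C : ℝ≥0∞ := ENNReal.ofReal (c ^ p / 2 ^ ((1 + 2 * (1 / p)) * ((1:ℝ) / 2 * p))) with hC_def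
  have hC0 : C ≠ 0 := (ENNReal.ofReal_pos.2 (by positivity)).ne'
  have hCtop : C ≠ ⊤ := ENNReal.ofReal_ne_top
  have main : ∀ δ : ℝ, 0 < δ → ∫⁻ x in Metric.ball x₀ δ, steinD (1 / p) f x ^ p = ⊤ := by
    intro δ hδ
    set m : ℝ := min δ (min ηL ηR) with hm_def
    have hm : 0 < m := lt_min hδ (lt_min hηL hηR)
    have hmδ : m ≤ δ := min_le_left _ _
    have hmL : m ≤ ηL := le_trans (min_le_right _ _) (min_le_left _ _)
    have hmR : m ≤ ηR := le_trans (min_le_right _ _) (min_le_right _ _)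
    -- pointwise bound
    have hb : ∀ x ∈ Ioo x₀ (x₀ + m),
        C * (ENNReal.ofReal (x - x₀))⁻¹ ≤ steinD (1 / p) f x ^ p := by
      intro x hx
      refine steinD_key hp hc f hx.1 ?_
      intro y hy
      have hfx : dist (f x) R < ‖R - L‖ / 4 := by
        refine hRclose hx.1 ?_
        rw [Real.dist_eq, abs_of_pos (by linarith [hx.1])]
        linarith [hx.2]
      have hfy : dist (f y) L < ‖R - L‖ / 4 := by
        refine hLclose hy.2 ?_
        rw [Real.dist_eq, abs_of_neg (by linarith [hy.2] : y - x₀ < 0)]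
        have := hy.1
        have hx2 := hx.2
        linarith
      have key : R - L = (R - f x) + (f x - f y) + (f y - L) := by ring
      have h1 : ‖R - L‖ ≤ ‖R - f x‖ + ‖f x - f y‖ + ‖f y - L‖ := by
        rw [key]; exact norm_add₃_le
      have e1 : ‖R - f x‖ = dist (f x) R := by rw [dist_eq_norm, norm_sub_rev]
      have e2 : ‖f y - L‖ = dist (f y) L := by rw [dist_eq_norm]
      rw [hc_def]
      linarith [h1, e1 ▸ hfx, e2 ▸ hfy]
    -- the translated integral is infinite
    have htrans : ∫⁻ x in Ioo x₀ (x₀ + m), C * (ENNReal.ofReal (x - x₀))⁻¹ = ⊤ := by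
      have himg := (measurePreserving_add_right volume x₀).setLIntegral_comp_emb
        (MeasurableEquiv.addRight x₀).measurableEmbedding
        (fun x => C * (ENNReal.ofReal (x - x₀))⁻¹) (Ioo 0 m)
      simp only [add_sub_cancel_right, image_add_const_Ioo, zero_add] at himg
      rw [add_comm m x₀] at himg
      rw [← himg, lintegral_const_mul' _ _ hCtop, lintegral_inv_Ioo_top hm,
        ENNReal.mul_top hC0]
    -- combine
    have hsub : Ioo x₀ (x₀ + m) ⊆ Metric.ball x₀ δ := by
      intro x hx
      rw [Metric.mem_ball, Real.dist_eq, abs_of_pos (by linarith [hx.1])]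
      linarith [hx.2]
    have hchain : (⊤ : ℝ≥0∞) ≤ ∫⁻ x in Metric.ball x₀ δ, steinD (1 / p) f x ^ p := by
      calc (⊤ : ℝ≥0∞) = ∫⁻ x in Ioo x₀ (x₀ + m), C * (ENNReal.ofReal (x - x₀))⁻¹ := htrans.symm
        _ ≤ ∫⁻ x in Ioo x₀ (x₀ + m), steinD (1 / p) f x ^ p :=
            setLIntegral_mono' measurableSet_Ioo hb
        _ ≤ ∫⁻ x in Metric.ball x₀ δ, steinD (1 / p) f x ^ p :=
            lintegral_mono_set hsub
    exact top_le_iff.1 hchain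
  refine ⟨main, ?_⟩
  have h1 := main 1 one_pos
  have h2 : ∫⁻ x in Metric.ball x₀ 1, steinD (1 / p) f x ^ p
      ≤ ∫⁻ x : ℝ, steinD (1 / p) f x ^ p := setLIntegral_le_lintegral _ _
  rw [h1] at h2
  exact top_le_iff.1 h2
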